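/- arXiv:1208.3507 — 3 statements merged into one kernel-verified Lean document; each statement's English description precedes it below -/
import Mathlib

section
/- Let γ > 0 and α > 0 be constants such that α + γ·cos_p^{(p-1)}(ψ)·sin_p(ψ) > 0 for all ψ ∈ [-π_p/2, π_p/2]. Then the time δ needed for the solution of ψ' = α + γ·cos_p^{(p-1)}(ψ)·sin_p(ψ), ψ(0) = -π_p/2, to reach π_p/2 equals ∫_{-π_p/2}^{π_p/2} dψ/(α + γ·cos_p^{(p-1)}(ψ)·sin_p(ψ)), and this integral is strictly greater than π_p/α. -/
open Real Set Filter MeasureTheory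

/-- The signed power `x^{(q)} := |x|^{q-?}`; here `spow x q = |x|^q · sign x`,
so that `x^{(p-1)} = |x|^{p-2}·x = spow x (p-1)`. -/
noncomputable def spow (x q : ℝ) : ℝ := Real.sign x * |x| ^ q

/-- The generalized half-period `π_p = ∫_{-1}^1 (1-|s|^p)^{-1/p} ds`. -/
noncomputable def pip (p : ℝ) : ℝ := ∫ s in (-1:ℝ)..1, (1 - |s| ^ p) ^ (-1/p)

/-- `sinp` and `cosp` are the generalized p-trigonometric functions:
on `[-π_p/2, π_p/2]` the function `sinp` is defined implicitly by
`t = ∫_0^{sinp t} (1-|s|^p)^{-1/p} ds`, it satisfies the reflection rule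
`sinp t = sinp (π_p - t)` on `[π_p/2, 3π_p/2]`, is `2π_p`-periodic, and
`cosp` is its derivative. -/
def IsPTrig (p : ℝ) (sinp cosp : ℝ → ℝ) : Prop :=
  (∀ t ∈ Set.Icc (-(pip p)/2) (pip p/2),
      t = ∫ s in (0:ℝ)..(sinp t), (1 - |s| ^ p) ^ (-1/p)) ∧
  (∀ t ∈ Set.Icc (pip p/2) (3 * pip p/2), sinp t = sinp (pip p - t)) ∧
  (∀ t, sinp (t + 2 * pip p) = sinp t) ∧
  (∀ t, HasDerivAt sinp (cosp t) t)

open scoped Topology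

namespace S10

noncomputable def g (p : ℝ) (s : ℝ) : ℝ := (1 - |s| ^ p) ^ (-1/p)

lemma g_even (p s : ℝ) : g p (-s) = g p s := by simp [g]

lemma g_meas (p : ℝ) : Measurable (g p) := by unfold g; fun_prop

lemma exp_neg (p : ℝ) (hp : 1 < p) : -1/p < 0 :=
  div_neg_of_neg_of_pos (by norm_num) (by linarith)

lemma g_pos (p : ℝ) (hp : 1 < p) {s : ℝ} (hs : |s| < 1) : 0 < g p s := by
  have h1 : |s| ^ p < 1 := Real.rpow_lt_one (abs_nonneg s) hs (by linarith)
  exact Real.rpow_pos_of_pos (by linarith) _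

lemma base_ne (p : ℝ) (hp : 1 < p) {s : ℝ} (hs : |s| ≠ 1) : 1 - |s| ^ p ≠ 0 := by
  rcases lt_or_gt_of_ne hs with h | h
  · have : |s| ^ p < 1 := Real.rpow_lt_one (abs_nonneg s) h (by linarith)
    linarith
  · have : 1 < |s| ^ p :=
      Real.one_lt_rpow_iff_of_pos (by linarith) |>.mpr (Or.inl ⟨h, by linarith⟩)
    linarith

lemma abs_eq_one_of_base_eq (p : ℝ) (hp : 1 < p) {s : ℝ} (hs : 1 - |s| ^ p = 0) : |s| = 1 := by
  by_contra h; exact base_ne p hp h hs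

lemma g_contAt (p : ℝ) (hp : 1 < p) {s : ℝ} (hs : 1 - |s| ^ p ≠ 0) :
    ContinuousAt (g p) s := by
  have h1 : ContinuousAt (fun y : ℝ => 1 - |y| ^ p) s :=
    (continuous_const.sub
      ((Real.continuous_rpow_const (by linarith)).comp continuous_abs)).continuousAt
  exact h1.rpow_const (Or.inl hs)

lemma key_ineq (p : ℝ) (hp : 1 < p) {u : ℝ} (hu : 0 ≤ u) (h : u ≠ 1) :
    |1 - u| ≤ |1 - u ^ p| := by
  rcases lt_or_gt_of_ne h with hlt | hgt
  · have h1 : u ^ p ≤ u := by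
      calc u ^ p ≤ u ^ (1:ℝ) :=
        Real.rpow_le_rpow_of_exponent_ge' hu hlt.le (by linarith) (by linarith)
      _ = u := Real.rpow_one _
    have h2 : (0:ℝ) ≤ u ^ p := Real.rpow_nonneg hu p
    rw [abs_of_nonneg (by linarith : (0:ℝ) ≤ 1 - u),
        abs_of_nonneg (by linarith : (0:ℝ) ≤ 1 - u ^ p)]
    linarith
  · have h1 : u ≤ u ^ p := by
      calc u = u ^ (1:ℝ) := (Real.rpow_one _).symm
      _ ≤ u ^ p := Real.rpow_le_rpow_of_exponent_le hgt.le (by linarith)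
    rw [abs_of_nonpos (by linarith : 1 - u ≤ 0),
        abs_of_nonpos (by linarith : 1 - u ^ p ≤ 0)]
    linarith

lemma g_bound (p : ℝ) (hp : 1 < p) (s : ℝ) : |g p s| ≤ (abs (1 - |s|)) ^ (-1/p) := by
  refine le_trans (Real.abs_rpow_le_abs_rpow _ _) ?_
  rcases eq_or_ne (|s|) 1 with h | h
  · simp [h, Real.zero_rpow (exp_neg p hp).ne]
  · have key := key_ineq p hp (abs_nonneg s) h
    have hb : 0 < (abs (1 - |s|)) := by
      rw [abs_pos]; intro hc; apply h; linarith
    exact Real.rpow_le_rpow_of_nonpos hb key (exp_neg p hp).le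

lemma intInt_abs_rpow {r : ℝ} (hr : -1 < r) (a b : ℝ) :
    IntervalIntegrable (fun x : ℝ => |x| ^ r) volume a b := by
  have h0 : ∀ c : ℝ, 0 ≤ c → IntervalIntegrable (fun x : ℝ => |x| ^ r) volume 0 c := by
    intro c hc
    have h1 := intervalIntegral.intervalIntegrable_rpow' (a := 0) (b := c) hr
    rw [intervalIntegrable_iff, uIoc_of_le hc] at h1 ⊢
    exact h1.congr_fun (fun x hx => by rw [abs_of_pos hx.1]) measurableSet_Ioc
  have hall : ∀ c : ℝ, IntervalIntegrable (fun x : ℝ => |x| ^ r) volume 0 c := by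
    intro c
    rcases le_total 0 c with h | h
    · exact h0 c h
    · have h2 := h0 (-c) (by linarith)
      rw [IntervalIntegrable.iff_comp_neg] at h2
      simpa using h2
  exact (hall a).symm.trans (hall b)

lemma intInt_dom {r : ℝ} (hr : -1 < r) (a b : ℝ) :
    IntervalIntegrable (fun s : ℝ => (abs (1 - |s|)) ^ r) volume a b := by
  have h0 : ∀ c : ℝ, 0 ≤ c →
      IntervalIntegrable (fun s : ℝ => (abs (1 - |s|)) ^ r) volume 0 c := by
    intro c hc
    have h1 := (intInt_abs_rpow hr 1 (1 - c)).comp_sub_left 1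
    rw [intervalIntegrable_iff] at h1 ⊢
    rw [show (1:ℝ) - 1 = 0 by norm_num, show (1:ℝ) - (1 - c) = c by ring] at h1
    rw [uIoc_of_le hc] at h1 ⊢
    exact h1.congr_fun (fun x hx => by rw [abs_of_pos hx.1]) measurableSet_Ioc
  have hall : ∀ c : ℝ, IntervalIntegrable (fun s : ℝ => (abs (1 - |s|)) ^ r) volume 0 c := by
    intro c
    rcases le_total 0 c with h | h
    · exact h0 c h
    · have h2 := h0 (-c) (by linarith)
      rw [IntervalIntegrable.iff_comp_neg] at h2
      simpa using h2
  exact (hall a).symm.trans (hall b)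

lemma intInt_g (p : ℝ) (hp : 1 < p) (a b : ℝ) : IntervalIntegrable (g p) volume a b := by
  have hr : (-1:ℝ) < -1/p := by
    rw [neg_div]
    have : 1/p < 1 := by rw [div_lt_one (by linarith)]; linarith
    linarith
  refine (intInt_dom hr a b).mono_fun ((g_meas p).aestronglyMeasurable.restrict) ?_
  refine Eventually.of_forall fun x => ?_
  have h1 := g_bound p hp x
  have h2 : (0:ℝ) ≤ (abs (1 - |x|)) ^ (-1/p) := Real.rpow_nonneg (abs_nonneg _) _
  simp only [Real.norm_eq_abs]
  rw [abs_of_nonneg h2]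
  exact h1

noncomputable def F (p : ℝ) (y : ℝ) : ℝ := ∫ s in (0:ℝ)..y, g p s

lemma F_odd (p : ℝ) (y : ℝ) : F p (-y) = - F p y := by
  have h := intervalIntegral.integral_comp_neg (a := (0:ℝ)) (b := y) (fun s => g p s)
  simp only [g_even] at h
  unfold F
  rw [h, neg_zero, intervalIntegral.integral_symm]

lemma F_sub (p : ℝ) (hp : 1 < p) (y z : ℝ) : F p z - F p y = ∫ s in y..z, g p s := by
  unfold F
  rw [← intervalIntegral.integral_add_adjacent_intervals (a := (0:ℝ)) (b := y) (c := z)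
    (intInt_g p hp 0 y) (intInt_g p hp y z)]
  ring

lemma F_strictMonoOn (p : ℝ) (hp : 1 < p) : StrictMonoOn (F p) (Icc (-1) 1) := by
  intro y hy z hz hyz
  have h : 0 < ∫ s in y..z, g p s := by
    apply intervalIntegral.intervalIntegral_pos_of_pos_on (intInt_g p hp y z) _ hyz
    intro x hx
    exact g_pos p hp (abs_lt.mpr ⟨by linarith [hy.1, hx.1], by linarith [hz.2, hx.2]⟩)
  have := F_sub p hp y z
  linarith

lemma F_hasDeriv (p : ℝ) (hp : 1 < p) {y : ℝ} (hy : 1 - |y| ^ p ≠ 0) :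
    HasDerivAt (F p) (g p y) y :=
  intervalIntegral.integral_hasDerivAt_right (intInt_g p hp 0 y)
    ⟨univ, univ_mem, ((g_meas p).aestronglyMeasurable).restrict⟩ (g_contAt p hp hy)

lemma F_one_pos (p : ℝ) (hp : 1 < p) : 0 < F p 1 := by
  apply intervalIntegral.intervalIntegral_pos_of_pos_on (intInt_g p hp 0 1) _ one_pos
  intro x hx
  exact g_pos p hp (abs_lt.mpr ⟨by linarith [hx.1], hx.2⟩)

lemma pip_eq (p : ℝ) (hp : 1 < p) : pip p = 2 * F p 1 := by
  have h : pip p = ∫ s in (-1:ℝ)..1, g p s := rfl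
  have h0 : F p 0 = 0 := intervalIntegral.integral_same
  have h1 := F_sub p hp (-1) 0
  have h2 := F_sub p hp 0 1
  have h3 := F_odd p 1
  rw [h, ← intervalIntegral.integral_add_adjacent_intervals (a := (-1:ℝ)) (b := 0) (c := 1)
    (intInt_g p hp (-1) 0) (intInt_g p hp 0 1)]
  have e2 : F p 1 = ∫ s in (0:ℝ)..1, g p s := rfl
  linarith

lemma pip_pos (p : ℝ) (hp : 1 < p) : 0 < pip p := by
  rw [pip_eq p hp]; linarith [F_one_pos p hp]

lemma F_one (p : ℝ) (hp : 1 < p) : F p 1 = pip p / 2 := by rw [pip_eq p hp]; ring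

lemma F_negone (p : ℝ) (hp : 1 < p) : F p (-1) = -(pip p / 2) := by
  rw [F_odd p 1, F_one p hp]

lemma inv_ineq {α a b : ℝ} (hα : 0 < α) (ha : 0 < a) (hb : 0 < b) (hsum : a + b = 2*α) :
    (2/α ≤ a⁻¹ + b⁻¹) ∧ (a ≠ b → 2/α < a⁻¹ + b⁻¹) := by
  have heq2 : a⁻¹ + b⁻¹ = (2*α) / (a * b) := by
    rw [inv_add_inv ha.ne' hb.ne', hsum]
  constructor
  · have hprod : a * b ≤ α^2 := by nlinarith [sq_nonneg (a - b)]
    rw [heq2, div_le_div_iff₀ (by linarith) (mul_pos ha hb)]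
    nlinarith
  · intro hne
    have h9 : 0 < (a - b)^2 :=
      lt_of_le_of_ne (sq_nonneg _) (Ne.symm (pow_ne_zero 2 (sub_ne_zero.mpr hne)))
    have hprod2 : a * b < α^2 := by nlinarith
    rw [heq2, div_lt_div_iff₀ (by linarith) (mul_pos ha hb)]
    nlinarith

end S10

/-- if `α + γ·cos_p^{(p-1)}(ψ)·sin_p(ψ) > 0` on `[-π_p/2, π_p/2]`
(`γ > 0`, `α > 0`), the time `δ` for the solution of
`ψ' = α + γ·cos_p^{(p-1)}(ψ)·sin_p(ψ)`, `ψ(0) = -π_p/2`, to first reach `π_p/2`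
equals `∫_{-π_p/2}^{π_p/2} dψ/(α + γ·cos_p^{(p-1)}(ψ)·sin_p(ψ))`, and this
integral is strictly greater than `π_p/α`. -/
theorem stmt10 (p α γ : ℝ) (hp : 1 < p) (hα : 0 < α) (hγ : 0 < γ)
    (sinp cosp : ℝ → ℝ) (htrig : IsPTrig p sinp cosp)
    (hpos : ∀ x ∈ Set.Icc (-(pip p)/2) (pip p/2),
      0 < α + γ * spow (cosp x) (p-1) * sinp x)
    (ψ : ℝ → ℝ) (hψ0 : ψ 0 = -(pip p)/2)
    (hψ : ∀ t, HasDerivAt ψ (α + γ * spow (cosp (ψ t)) (p-1) * sinp (ψ t)) t)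
    (δ : ℝ) (hδ0 : 0 ≤ δ) (hδ : ψ δ = pip p / 2)
    (hfirst : ∀ t ∈ Set.Ico 0 δ, ψ t < pip p / 2) :
    δ = (∫ x in (-(pip p)/2)..(pip p/2),
          (α + γ * spow (cosp x) (p-1) * sinp x)⁻¹) ∧
    pip p / α < ∫ x in (-(pip p)/2)..(pip p/2),
          (α + γ * spow (cosp x) (p-1) * sinp x)⁻¹ := by
  obtain ⟨hF, hrefl, hper, hderiv⟩ := htrig
  have hpip := S10.pip_pos p hp
  set c : ℝ := pip p / 2 with hc_def
  have hc : 0 < c := by positivity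
  have hnegc : -(pip p)/2 = -c := by rw [hc_def]; ring
  rw [hnegc] at hpos hψ0 hF ⊢
  have hpip2 : pip p = 2 * c := by rw [hc_def]; ring
  -- continuity of sinp and ψ
  have scont : Continuous sinp := continuous_iff_continuousAt.mpr fun t => (hderiv t).continuousAt
  have hψcont : Continuous ψ := continuous_iff_continuousAt.mpr fun t => (hψ t).continuousAt
  -- F(sinp t) = t on [-c, c]
  have hFs : ∀ t ∈ Set.Icc (-c) c, S10.F p (sinp t) = t := fun t ht => (hF t ht).symm
  -- cosp vanishes at the endpoints
  have cosp_top : cosp c = 0 := by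
    have hmem : Icc c (3 * pip p / 2) ∈ 𝓝[≥] c :=
      Icc_mem_nhdsGE (by rw [hpip2]; linarith)
    have hd : HasDerivAt (fun t => sinp t - sinp (pip p - t)) (cosp c + cosp c) c := by
      have h1 : HasDerivAt (fun t : ℝ => pip p - t) (-1) c := (hasDerivAt_id c).const_sub (pip p)
      have h2 : HasDerivAt (fun t => sinp (pip p - t)) (cosp (pip p - c) * (-1)) c :=
        (hderiv (pip p - c)).comp c h1
      have h3 := (hderiv c).sub h2
      have he : pip p - c = c := by rw [hpip2]; ring
      rw [he] at h3
      exact h3.congr_deriv (by ring)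
    have hd0 : HasDerivWithinAt (fun t => sinp t - sinp (pip p - t)) 0 (Ici c) c := by
      refine (hasDerivWithinAt_const c (Ici c) 0).congr_of_eventuallyEq ?_ ?_
      · filter_upwards [hmem] with t ht
        rw [← hrefl t ht]; ring
      · rw [← hrefl c ⟨le_rfl, by rw [hpip2]; linarith⟩]; ring
    have := (uniqueDiffOn_Ici c c self_mem_Ici).eq_deriv (Ici c) hd.hasDerivWithinAt hd0
    linarith [this]
  have cosp_bot : cosp (-c) = 0 := by
    have hmem : Icc (-(3 * pip p / 2)) (-c) ∈ 𝓝[≤] (-c) :=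
      Icc_mem_nhdsLE (by rw [hpip2]; linarith)
    have hrefl2 : ∀ t ∈ Icc (-(3 * pip p / 2)) (-c), sinp t = sinp (-(pip p) - t) := by
      intro t ht
      have h1 : sinp t = sinp (t + 2 * pip p) := (hper t).symm
      have h2 : t + 2 * pip p ∈ Icc (pip p / 2) (3 * pip p / 2) := by
        constructor
        · have := ht.1; rw [hpip2] at *; linarith
        · have := ht.2; rw [hpip2] at *; linarith
      rw [h1, hrefl _ h2]
      congr 1; ring
    have hd : HasDerivAt (fun t => sinp t - sinp (-(pip p) - t)) (cosp (-c) + cosp (-c)) (-c) := by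
      have h1 : HasDerivAt (fun t : ℝ => -(pip p) - t) (-1) (-c) :=
        (hasDerivAt_id (-c)).const_sub (-(pip p))
      have h2 : HasDerivAt (fun t => sinp (-(pip p) - t)) (cosp (-(pip p) - -c) * (-1)) (-c) :=
        (hderiv (-(pip p) - -c)).comp (-c) h1
      have h3 := (hderiv (-c)).sub h2
      have he : -(pip p) - -c = -c := by rw [hpip2]; ring
      rw [he] at h3
      exact h3.congr_deriv (by ring)
    have hd0 : HasDerivWithinAt (fun t => sinp t - sinp (-(pip p) - t)) 0 (Iic (-c)) (-c) := by
      refine (hasDerivWithinAt_const (-c) (Iic (-c)) 0).congr_of_eventuallyEq ?_ ?_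
      · filter_upwards [hmem] with t ht
        rw [← hrefl2 t ht]; ring
      · rw [← hrefl2 (-c) ⟨by rw [hpip2]; linarith, le_rfl⟩]; ring
    have := (uniqueDiffOn_Iic (-c) (-c) self_mem_Iic).eq_deriv (Iic (-c))
      hd.hasDerivWithinAt hd0
    linarith [this]
  -- sinp values at the endpoints
  have sinp_top : sinp c = 1 := by
    have hFc : S10.F p (sinp c) = c := hFs c ⟨by linarith, le_rfl⟩
    have hb : 1 - |sinp c| ^ p = 0 := by
      by_contra hne
      have hdF := S10.F_hasDeriv p hp hne
      have hcomp : HasDerivAt (fun t => S10.F p (sinp t)) (S10.g p (sinp c) * cosp c) c :=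
        hdF.comp c (hderiv c)
      rw [cosp_top, mul_zero] at hcomp
      have h1 : HasDerivWithinAt (fun t => S10.F p (sinp t)) 1 (Iic c) c := by
        have hmem : Icc (-c) c ∈ 𝓝[≤] c := Icc_mem_nhdsLE (by linarith)
        refine (hasDerivWithinAt_id c (Iic c)).congr_of_eventuallyEq ?_ hFc
        filter_upwards [hmem] with t ht
        exact hFs t ht
      have := (uniqueDiffOn_Iic c c self_mem_Iic).eq_deriv (Iic c)
        hcomp.hasDerivWithinAt h1
      norm_num at this
    have habs : |sinp c| = 1 := S10.abs_eq_one_of_base_eq p hp hb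
    rcases abs_eq (by norm_num : (0:ℝ) ≤ 1) |>.mp habs with h | h
    · exact h
    · exfalso
      rw [h, S10.F_negone p hp] at hFc
      rw [hc_def] at hFc
      linarith
  have sinp_bot : sinp (-c) = -1 := by
    have hFc : S10.F p (sinp (-c)) = -c := hFs (-c) ⟨le_rfl, by linarith⟩
    have hb : 1 - |sinp (-c)| ^ p = 0 := by
      by_contra hne
      have hdF := S10.F_hasDeriv p hp hne
      have hcomp : HasDerivAt (fun t => S10.F p (sinp t)) (S10.g p (sinp (-c)) * cosp (-c)) (-c) :=
        hdF.comp (-c) (hderiv (-c))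
      rw [cosp_bot, mul_zero] at hcomp
      have h1 : HasDerivWithinAt (fun t => S10.F p (sinp t)) 1 (Ici (-c)) (-c) := by
        have hmem : Icc (-c) c ∈ 𝓝[≥] (-c) := Icc_mem_nhdsGE (by linarith)
        refine (hasDerivWithinAt_id (-c) (Ici (-c))).congr_of_eventuallyEq ?_ hFc
        filter_upwards [hmem] with t ht
        exact hFs t ht
      have := (uniqueDiffOn_Ici (-c) (-c) self_mem_Ici).eq_deriv (Ici (-c))
        hcomp.hasDerivWithinAt h1
      norm_num at this
    have habs : |sinp (-c)| = 1 := S10.abs_eq_one_of_base_eq p hp hb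
    rcases abs_eq (by norm_num : (0:ℝ) ≤ 1) |>.mp habs with h | h
    · exfalso
      rw [h, S10.F_one p hp] at hFc
      rw [hc_def] at hFc
      linarith
    · exact h
  -- sinp maps [-c,c] into [-1,1]
  have sinp_mem : ∀ t ∈ Set.Icc (-c) c, sinp t ∈ Set.Icc (-1:ℝ) 1 := by
    intro t ht
    constructor
    · by_contra hcon
      push_neg at hcon
      have hivt : Icc (sinp t) (sinp c) ⊆ sinp '' Icc t c :=
        intermediate_value_Icc ht.2 scont.continuousOn
      obtain ⟨t₂, ht₂, hst₂⟩ := hivt ⟨hcon.le, by rw [sinp_top]; norm_num⟩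
      have hFt₂ : S10.F p (sinp t₂) = t₂ := hFs t₂ ⟨by linarith [ht.1, ht₂.1], ht₂.2⟩
      rw [hst₂, S10.F_negone p hp, ← hc_def] at hFt₂
      have htne : t ≠ -c := fun h => by rw [h, sinp_bot] at hcon; linarith
      have h5 : -c < t := lt_of_le_of_ne ht.1 (Ne.symm htne)
      linarith [ht₂.1]
    · by_contra hcon
      push_neg at hcon
      have hivt : Icc (sinp (-c)) (sinp t) ⊆ sinp '' Icc (-c) t :=
        intermediate_value_Icc ht.1 scont.continuousOn
      obtain ⟨t₂, ht₂, hst₂⟩ := hivt ⟨by rw [sinp_bot]; norm_num, hcon.le⟩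
      have hFt₂ : S10.F p (sinp t₂) = t₂ := hFs t₂ ⟨ht₂.1, by linarith [ht.2, ht₂.2]⟩
      rw [hst₂, S10.F_one p hp, ← hc_def] at hFt₂
      have htne : t ≠ c := fun h => by rw [h, sinp_top] at hcon; linarith
      have : t < c := lt_of_le_of_ne ht.2 htne
      linarith [ht₂.2]
  -- sinp is odd on [-c,c]
  have sinp_odd : ∀ t ∈ Set.Icc (-c) c, sinp (-t) = -sinp t := by
    intro t ht
    have h1 : -t ∈ Set.Icc (-c) c := ⟨by linarith [ht.2], by linarith [ht.1]⟩
    have hm1 := sinp_mem _ h1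
    have hm2 := sinp_mem t ht
    refine (S10.F_strictMonoOn p hp).injOn hm1 ⟨by linarith [hm2.2], by linarith [hm2.1]⟩ ?_
    rw [hFs (-t) h1, S10.F_odd p (sinp t), hFs t ht]
  -- the key pointwise identity for spow (cosp t) (p-1)
  have key : ∀ t ∈ Set.Icc (-c) c,
      spow (cosp t) (p-1) = (1 - |sinp t| ^ p) ^ ((p-1)/p) := by
    intro t ht
    by_cases h1 : t = c
    · rw [h1, cosp_top, sinp_top]
      rw [spow, Real.sign_zero, zero_mul, abs_one, Real.one_rpow, sub_self,
        Real.zero_rpow (ne_of_gt (div_pos (by linarith) (by linarith : (0:ℝ) < p)))]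
    by_cases h2 : t = -c
    · rw [h2, cosp_bot, sinp_bot]
      rw [spow, Real.sign_zero, zero_mul, abs_neg, abs_one, Real.one_rpow, sub_self,
        Real.zero_rpow (ne_of_gt (div_pos (by linarith) (by linarith : (0:ℝ) < p)))]
    · -- interior point
      have htlt : t < c := lt_of_le_of_ne ht.2 h1
      have htgt : -c < t := lt_of_le_of_ne ht.1 (Ne.symm h2)
      have hmem := sinp_mem t ht
      have hne1 : sinp t ≠ 1 := by
        intro h
        have := hFs t ht
        rw [h, S10.F_one p hp, ← hc_def] at this
        exact h1 this.symm
      have hnem1 : sinp t ≠ -1 := by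
        intro h
        have h5 := hFs t ht
        rw [h, S10.F_negone p hp, ← hc_def] at h5
        exact h2 h5.symm
      have habs : |sinp t| < 1 :=
        abs_lt.mpr ⟨lt_of_le_of_ne hmem.1 (Ne.symm hnem1), lt_of_le_of_ne hmem.2 hne1⟩
      have hb : (0:ℝ) < 1 - |sinp t| ^ p := by
        have : |sinp t| ^ p < 1 := Real.rpow_lt_one (abs_nonneg _) habs (by linarith)
        linarith
      have hdF := S10.F_hasDeriv p hp hb.ne'
      have hcomp : HasDerivAt (fun s => S10.F p (sinp s)) (S10.g p (sinp t) * cosp t) t :=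
        hdF.comp t (hderiv t)
      have hid : HasDerivAt (fun s => S10.F p (sinp s)) 1 t := by
        have hmem2 : Icc (-c) c ∈ 𝓝 t := Icc_mem_nhds htgt htlt
        refine (hasDerivAt_id t).congr_of_eventuallyEq ?_
        filter_upwards [hmem2] with s hs
        exact hFs s hs
      have huniq : S10.g p (sinp t) * cosp t = 1 := hcomp.unique hid
      have hgval : S10.g p (sinp t) = (1 - |sinp t| ^ p) ^ (-1/p) := rfl
      have hgpos : 0 < S10.g p (sinp t) := S10.g_pos p hp habs
      have hcosp : cosp t = (1 - |sinp t| ^ p) ^ (1/p) := by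
        have h3 : cosp t = (S10.g p (sinp t))⁻¹ := eq_inv_of_mul_eq_one_right huniq
        rw [h3, hgval, show -1/p = -(1/p) by ring, Real.rpow_neg hb.le, inv_inv]
      have hcpos : 0 < cosp t := by
        rw [hcosp]; exact Real.rpow_pos_of_pos hb _
      rw [spow, Real.sign_of_pos hcpos, abs_of_pos hcpos, one_mul, hcosp,
        ← Real.rpow_mul hb.le]
      congr 1
      field_simp
  -- derived continuous model f2 for the integrand
  have hexp_nonneg : (0:ℝ) ≤ (p-1)/p := le_of_lt (div_pos (by linarith) (by linarith))
  set f2 : ℝ → ℝ := fun x => α + γ * (1 - |sinp x| ^ p) ^ ((p-1)/p) * sinp x with hf2_def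
  have hEq : ∀ x ∈ Set.Icc (-c) c, α + γ * spow (cosp x) (p-1) * sinp x = f2 x := by
    intro x hx
    simp only [hf2_def]
    rw [key x hx]
  have hf2cont : Continuous f2 := by
    have habs : Continuous fun x : ℝ => 1 - |sinp x| ^ p :=
      continuous_const.sub
        (((Real.continuous_rpow_const (by linarith : (0:ℝ) ≤ p)).comp continuous_abs).comp scont)
    exact continuous_const.add
      ((continuous_const.mul ((Real.continuous_rpow_const hexp_nonneg).comp habs)).mul scont)
  have hf2pos : ∀ x ∈ Set.Icc (-c) c, 0 < f2 x := fun x hx => by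
    rw [← hEq x hx]; exact hpos x hx
  have hf2sum : ∀ x ∈ Set.Icc (-c) c, f2 x + f2 (-x) = 2 * α := by
    intro x hx
    have h1 := sinp_odd x hx
    simp only [hf2_def]
    rw [h1, abs_neg]
    ring
  -- the solution stays in [-c, c]
  have hup : ∀ t ∈ Set.Icc 0 δ, ψ t ≤ c := by
    intro t ht
    rcases eq_or_lt_of_le ht.2 with h | h
    · rw [h, hδ]
    · exact (hfirst t ⟨ht.1, h⟩).le
  have hmapsto : ∀ t ∈ Set.Icc 0 δ, ψ t ∈ Set.Icc (-c) c := by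
    intro t ht
    refine ⟨?_, hup t ht⟩
    by_contra hcon
    push_neg at hcon
    set T : Set ℝ := {s | s ∈ Set.Icc 0 t ∧ ψ s = -c} with hT_def
    have h0T : (0:ℝ) ∈ T := ⟨⟨le_rfl, ht.1⟩, hψ0⟩
    have hTne : T.Nonempty := ⟨0, h0T⟩
    have hTbdd : BddAbove T := ⟨t, fun s hs => hs.1.2⟩
    have hTclosed : IsClosed T := by
      have hTeq : T = Set.Icc 0 t ∩ ψ ⁻¹' {-c} := by
        ext s; simp [hT_def]
      rw [hTeq]
      exact isClosed_Icc.inter (isClosed_singleton.preimage hψcont)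
    have ht₀T : sSup T ∈ T := hTclosed.csSup_mem hTne hTbdd
    set t₀ := sSup T with ht₀_def
    have ht₀le : t₀ ≤ t := ht₀T.1.2
    have ht₀lt : t₀ < t := by
      refine lt_of_le_of_ne ht₀le (fun h => ?_)
      rw [h] at ht₀T
      rw [ht₀T.2] at hcon
      exact lt_irrefl _ hcon
    have hle2 : ∀ s ∈ Set.Ioc t₀ t, ψ s ≤ -c := by
      intro s hs
      by_contra hgt
      push_neg at hgt
      have hivt : Set.Icc (ψ t) (ψ s) ⊆ ψ '' Set.Icc s t :=
        intermediate_value_Icc' hs.2 hψcont.continuousOn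
      obtain ⟨u, hu, hψu⟩ := hivt ⟨hcon.le, hgt.le⟩
      have huT : u ∈ T := ⟨⟨le_trans (le_trans ht₀T.1.1 hs.1.le) hu.1, hu.2⟩, hψu⟩
      have := le_csSup hTbdd huT
      linarith [hs.1, hu.1]
    have hdpos : 0 < α + γ * spow (cosp (ψ t₀)) (p-1) * sinp (ψ t₀) := by
      apply hpos
      rw [ht₀T.2]
      exact ⟨le_rfl, by linarith⟩
    have hd := hψ t₀
    rw [hasDerivAt_iff_tendsto_slope] at hd
    have hd2 := hd.mono_left (nhdsWithin_mono t₀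
      (fun x (hx : x ∈ Set.Ioi t₀) => Set.mem_compl_singleton_iff.mpr (ne_of_gt hx)))
    have hslope := hd2.eventually (eventually_gt_nhds hdpos)
    have hIoc : Set.Ioc t₀ t ∈ 𝓝[>] t₀ := Ioc_mem_nhdsGT ht₀lt
    obtain ⟨s, hs1, hs2⟩ := (hslope.and (eventually_of_mem hIoc (fun y hy => hy))).exists
    rw [slope_def_field] at hs1
    have h7 : 0 < s - t₀ := by linarith [hs2.1]
    have h8 : 0 < ψ s - ψ t₀ := by
      have h6 := mul_pos hs1 h7
      rwa [div_mul_cancel₀ _ (ne_of_gt h7)] at h6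
    have h9 := hle2 s hs2
    rw [ht₀T.2] at h8
    linarith
  -- Part A: the substitution
  have huIcc : Set.uIcc (0:ℝ) δ = Set.Icc 0 δ := uIcc_of_le hδ0
  have hcontf' : ContinuousOn (fun t => α + γ * spow (cosp (ψ t)) (p-1) * sinp (ψ t))
      (Set.uIcc 0 δ) := by
    rw [huIcc]
    refine ((hf2cont.comp hψcont).continuousOn).congr ?_
    intro t ht
    exact hEq (ψ t) (hmapsto t ht)
  have hgcont : ContinuousOn (fun y => (α + γ * spow (cosp y) (p-1) * sinp y)⁻¹)
      (ψ '' Set.uIcc 0 δ) := by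
    have himg : ψ '' Set.uIcc 0 δ ⊆ Set.Icc (-c) c := by
      rw [huIcc]; rintro y ⟨t, ht, rfl⟩; exact hmapsto t ht
    refine ContinuousOn.mono ?_ himg
    refine (hf2cont.continuousOn.inv₀ fun x hx => (hf2pos x hx).ne').congr ?_
    intro x hx
    simp only
    rw [hEq x hx]
    rfl
  have hsub := intervalIntegral.integral_comp_smul_deriv' (a := 0) (b := δ)
    (f := ψ) (f' := fun t => α + γ * spow (cosp (ψ t)) (p-1) * sinp (ψ t))
    (g := fun y => (α + γ * spow (cosp y) (p-1) * sinp y)⁻¹)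
    (fun x _ => hψ x) hcontf' hgcont
  rw [hψ0, hδ] at hsub
  have hLHS : (∫ x in (0:ℝ)..δ, (α + γ * spow (cosp (ψ x)) (p-1) * sinp (ψ x)) •
      ((fun y => (α + γ * spow (cosp y) (p-1) * sinp y)⁻¹) ∘ ψ) x) = δ := by
    have hEq1 : Set.EqOn (fun x => (α + γ * spow (cosp (ψ x)) (p-1) * sinp (ψ x)) •
        ((fun y => (α + γ * spow (cosp y) (p-1) * sinp y)⁻¹) ∘ ψ) x) (fun _ => (1:ℝ))
        (Set.uIcc 0 δ) := by
      intro x hx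
      rw [huIcc] at hx
      have hp1 : 0 < α + γ * spow (cosp (ψ x)) (p-1) * sinp (ψ x) := hpos _ (hmapsto x hx)
      simp only [Function.comp_apply, smul_eq_mul]
      exact mul_inv_cancel₀ hp1.ne'
    rw [intervalIntegral.integral_congr hEq1]
    simp
  -- Part B: the strict inequality
  have hIntEq : (∫ x in (-c)..c, (α + γ * spow (cosp x) (p-1) * sinp x)⁻¹)
      = ∫ x in (-c)..c, (f2 x)⁻¹ := by
    apply intervalIntegral.integral_congr
    intro x hx
    rw [uIcc_of_le (by linarith : -c ≤ c)] at hx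
    simp only
    rw [hEq x hx]
  have hcont1 : ContinuousOn (fun x => (f2 x)⁻¹) (Set.Icc (-c) c) :=
    hf2cont.continuousOn.inv₀ fun x hx => (hf2pos x hx).ne'
  have hcont2 : ContinuousOn (fun x => (f2 (-x))⁻¹) (Set.Icc 0 c) := by
    have hcc : ContinuousOn (fun x : ℝ => f2 (-x)) (Set.Icc 0 c) :=
      (hf2cont.comp continuous_neg).continuousOn
    apply hcc.inv₀
    intro x hx
    exact (hf2pos (-x) ⟨by linarith [hx.2], by linarith [hx.1]⟩).ne'
  have i2 : IntervalIntegrable (fun x => (f2 x)⁻¹) volume 0 c := by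
    apply ContinuousOn.intervalIntegrable
    apply hcont1.mono
    rw [uIcc_of_le hc.le]
    exact Icc_subset_Icc (by linarith) le_rfl
  have i3 : IntervalIntegrable (fun x => (f2 (-x))⁻¹) volume 0 c := by
    apply ContinuousOn.intervalIntegrable
    rwa [uIcc_of_le hc.le]
  have hsplit : (∫ x in (-c)..c, (f2 x)⁻¹) = ∫ x in (0:ℝ)..c, ((f2 x)⁻¹ + (f2 (-x))⁻¹) := by
    have i1 : IntervalIntegrable (fun x => (f2 x)⁻¹) volume (-c) 0 := by
      apply ContinuousOn.intervalIntegrable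
      apply hcont1.mono
      rw [uIcc_of_le (by linarith : -c ≤ 0)]
      exact Icc_subset_Icc le_rfl (by linarith)
    rw [← intervalIntegral.integral_add_adjacent_intervals i1 i2]
    have hneg2 : (∫ x in (-c)..(0:ℝ), (f2 x)⁻¹) = ∫ x in (0:ℝ)..c, (f2 (-x))⁻¹ := by
      have h6 := intervalIntegral.integral_comp_neg (a := (0:ℝ)) (b := c) (fun x => (f2 x)⁻¹)
      rw [neg_zero] at h6
      rw [← h6]
    rw [hneg2, intervalIntegral.integral_add i2 i3]
    ring
  have hpt : ∀ x ∈ Set.Icc (0:ℝ) c, 2/α ≤ (f2 x)⁻¹ + (f2 (-x))⁻¹ ∧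
      (f2 x ≠ f2 (-x) → 2/α < (f2 x)⁻¹ + (f2 (-x))⁻¹) := by
    intro x hx
    have hxI : x ∈ Set.Icc (-c) c := ⟨by linarith [hx.1], hx.2⟩
    have hxI' : -x ∈ Set.Icc (-c) c := ⟨by linarith [hx.2], by linarith [hx.1]⟩
    exact S10.inv_ineq hα (hf2pos x hxI) (hf2pos (-x) hxI') (hf2sum x hxI)
  have hwit : f2 (c/2) ≠ f2 (-(c/2)) := by
    have hxI : (c/2 : ℝ) ∈ Set.Icc (-c) c := ⟨by linarith, by linarith⟩
    have hs0 : sinp (c/2) ≠ 0 := by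
      intro h
      have h5 := hFs (c/2) hxI
      rw [h] at h5
      have h6 : S10.F p 0 = 0 := intervalIntegral.integral_same
      rw [h6] at h5
      linarith
    have hmem := sinp_mem (c/2) hxI
    have hne1 : sinp (c/2) ≠ 1 := fun h => by
      have h5 := hFs (c/2) hxI
      rw [h, S10.F_one p hp, ← hc_def] at h5
      linarith
    have hnem1 : sinp (c/2) ≠ -1 := fun h => by
      have h5 := hFs (c/2) hxI
      rw [h, S10.F_negone p hp, ← hc_def] at h5
      linarith
    have habs : |sinp (c/2)| < 1 :=
      abs_lt.mpr ⟨lt_of_le_of_ne hmem.1 (Ne.symm hnem1), lt_of_le_of_ne hmem.2 hne1⟩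
    have hbpos : 0 < 1 - |sinp (c/2)| ^ p := by
      have h6 : |sinp (c/2)| ^ p < 1 := Real.rpow_lt_one (abs_nonneg _) habs (by linarith)
      linarith
    have hterm : γ * (1 - |sinp (c/2)| ^ p) ^ ((p-1)/p) * sinp (c/2) ≠ 0 :=
      mul_ne_zero (mul_ne_zero hγ.ne' (Real.rpow_pos_of_pos hbpos _).ne') hs0
    intro hcontra
    have hodd := sinp_odd (c/2) hxI
    simp only [hf2_def] at hcontra
    rw [hodd, abs_neg, mul_neg] at hcontra
    apply hterm
    linarith [hcontra]
  have hconst : (∫ x in (0:ℝ)..c, (2/α)) = pip p / α := by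
    rw [intervalIntegral.integral_const, smul_eq_mul, hpip2]
    ring
  have hlt : (∫ x in (0:ℝ)..c, (2/α)) < ∫ x in (0:ℝ)..c, ((f2 x)⁻¹ + (f2 (-x))⁻¹) := by
    apply intervalIntegral.integral_lt_integral_of_continuousOn_of_le_of_exists_lt hc
      continuousOn_const
      ((hcont1.mono (Icc_subset_Icc (by linarith) le_rfl)).add hcont2)
    · intro x hx
      exact (hpt x (Set.Ioc_subset_Icc_self hx)).1
    · exact ⟨c/2, ⟨by linarith, by linarith⟩, (hpt (c/2) ⟨by linarith, by linarith⟩).2 hwit⟩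
  constructor
  · rw [← hsub]
    exact hLHS.symm
  · rw [hIntEq, hsplit]
    calc pip p / α = ∫ x in (0:ℝ)..c, (2/α) := hconst.symm
    _ < _ := hlt
end

section
/- Let u be a p-Laplacian eigenfunction on a compact n-manifold M with Ric ≥ (n-1)k, k < 0, min u = -1, satisfying the gradient bound |∇u(x)| ≤ w'(w^{-1}(u(x))) for a model function w with w(a) = -1, w'(a) = 0, w' > 0 on (a, b). Then for every ε > 0 small, the sublevel set u^{-1}([-1, -1+ε)) contains a geodesic ball of radius r_ε = w^{-1}(-1+ε) - a centered at any minimum point of u. -/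
open Topology Filter


/-- let `u` be an eigenfunction on a compact manifold `M` with
`min u = -1` satisfying the gradient comparison `|∇u| ≤ w'∘w⁻¹∘u` for a model
`w` with `w(a) = -1`, `w'(a) = 0`, `w' > 0` on `(a,b)`.  Then for all small
`ε > 0` the set `u⁻¹([-1,-1+ε))` contains the ball of radius
`r_ε = w⁻¹(-1+ε) - a` about any minimum point `x₀`.  The Riemannian structure
enters through the existence of unit-speed minimizing geodesics and through the
gradient bound along such geodesics. -/
theorem stmt17 {M : Type*} [MetricSpace M] [CompactSpace M]
    (u : M → ℝ) (hc : Continuous u)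
    (x₀ : M) (hmin : u x₀ = -1) (hlb : ∀ x, -1 ≤ u x)
    (a b : ℝ) (hab : a < b)
    (w w' winv : ℝ → ℝ)
    (hwa : w a = -1)
    (hwd : ∀ t ∈ Set.Icc a b, HasDerivAt w (w' t) t)
    (hw'a : w' a = 0)
    (hw'pos : ∀ t ∈ Set.Ioo a b, 0 < w' t)
    (hinv : ∀ t ∈ Set.Icc a b, winv (w t) = t)
    (hrange : ∀ x, u x ∈ Set.Icc (-1) (w b))
    -- existence of unit-speed minimizing geodesics
    (hgeo : ∀ x y : M, ∃ γ : ℝ → M, γ 0 = x ∧ γ (dist x y) = y ∧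
        ∀ s ∈ Set.Icc 0 (dist x y), ∀ t ∈ Set.Icc 0 (dist x y),
          dist (γ s) (γ t) = |s - t|)
    -- the gradient comparison along unit-speed minimizing geodesics
    (hgrad : ∀ (γ : ℝ → M) (L : ℝ),
        (∀ s ∈ Set.Icc 0 L, ∀ t ∈ Set.Icc 0 L, dist (γ s) (γ t) = |s - t|) →
        ∀ t ∈ Set.Ioo 0 L, ∃ d : ℝ,
          HasDerivAt (fun s => u (γ s)) d t ∧ |d| ≤ w' (winv (u (γ t)))) :
    ∃ ε₀ > 0, ∀ ε ∈ Set.Ioo 0 ε₀,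
      Metric.ball x₀ (winv (-1 + ε) - a) ⊆ {x | u x < -1 + ε} := by
  classical
  have hab' : a ≤ b := hab.le
  have hwc : ContinuousOn w (Set.Icc a b) := fun t ht =>
    ((hwd t ht).continuousAt).continuousWithinAt
  have hmono : StrictMonoOn w (Set.Icc a b) := by
    apply strictMonoOn_of_deriv_pos (convex_Icc a b) hwc
    intro x hx
    rw [interior_Icc] at hx
    rw [(hwd x (Set.Ioo_subset_Icc_self hx)).deriv]
    exact hw'pos x hx
  have hamem : a ∈ Set.Icc a b := Set.left_mem_Icc.2 hab'
  have hbmem : b ∈ Set.Icc a b := Set.right_mem_Icc.2 hab'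
  have hwb : -1 < w b := by
    have := hmono hamem hbmem hab
    rwa [hwa] at this
  have hspec : ∀ y ∈ Set.Icc (-1:ℝ) (w b), winv y ∈ Set.Icc a b ∧ w (winv y) = y := by
    intro y hy
    have hy' : y ∈ Set.Icc (w a) (w b) := by rwa [hwa]
    obtain ⟨s, hs, hws⟩ := intermediate_value_Icc hab' hwc hy'
    have h1 : winv (w s) = s := hinv s hs
    rw [hws] at h1
    rw [h1]
    exact ⟨hs, hws⟩
  -- continuity of winv at interior points of [-1, w b]
  have hwinv_cont : ∀ y ∈ Set.Ioo (-1:ℝ) (w b), ContinuousAt winv y := by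
    intro y hy
    obtain ⟨hsmem, hws⟩ := hspec y (Set.Ioo_subset_Icc_self hy)
    have hsa : a < winv y := by
      refine (hmono.lt_iff_lt hamem hsmem).1 ?_
      rw [hwa, hws]; exact hy.1
    have hsb : winv y < b := by
      refine (hmono.lt_iff_lt hsmem hbmem).1 ?_
      rw [hws]; exact hy.2
    rw [ContinuousAt, Metric.tendsto_nhds]
    intro δ hδ
    set s := winv y
    set s₁ := max a (s - δ/2) with hs₁_def
    set s₂ := min b (s + δ/2) with hs₂_def
    have hs₁lt : s₁ < s := max_lt hsa (by linarith)
    have hs₂gt : s < s₂ := lt_min hsb (by linarith)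
    have hs₁m : s₁ ∈ Set.Icc a b := ⟨le_max_left _ _, hs₁lt.le.trans hsmem.2⟩
    have hs₂m : s₂ ∈ Set.Icc a b := ⟨hsmem.1.trans hs₂gt.le, min_le_left _ _⟩
    have hw₁ : w s₁ < y := by rw [← hws]; exact hmono hs₁m hsmem hs₁lt
    have hw₂ : y < w s₂ := by rw [← hws]; exact hmono hsmem hs₂m hs₂gt
    filter_upwards [Ioo_mem_nhds hw₁ hw₂] with z hz
    have hz' : z ∈ Set.Icc (-1:ℝ) (w b) := by
      constructor
      · have : w a ≤ w s₁ := hmono.monotoneOn hamem hs₁m hs₁m.1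
        rw [hwa] at this; linarith [hz.1]
      · have : w s₂ ≤ w b := hmono.monotoneOn hs₂m hbmem hs₂m.2
        linarith [hz.2]
    obtain ⟨hzm, hwz⟩ := hspec z hz'
    have h1 : s₁ < winv z := by
      refine (hmono.lt_iff_lt hs₁m hzm).1 ?_
      rw [hwz]; exact hz.1
    have h2 : winv z < s₂ := by
      refine (hmono.lt_iff_lt hzm hs₂m).1 ?_
      rw [hwz]; exact hz.2
    rw [Real.dist_eq, abs_lt]
    have e1 : s - δ/2 ≤ s₁ := le_max_right _ _
    have e2 : s₂ ≤ s + δ/2 := min_le_right _ _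
    constructor <;> [skip; skip] <;> linarith
  -- helper: strict comparison for winv
  refine ⟨w b + 1, by linarith, ?_⟩
  rintro ε ⟨hε0, hεb⟩ x hx
  show u x < -1 + ε
  have hyε : (-1 + ε) ∈ Set.Icc (-1:ℝ) (w b) := ⟨by linarith, by linarith⟩
  obtain ⟨hsεm, hwsε⟩ := hspec (-1+ε) hyε
  set sε := winv (-1+ε) with hsε_def
  have hsεa : a < sε := by
    refine (hmono.lt_iff_lt hamem hsεm).1 ?_
    rw [hwa, hwsε]; linarith
  have hsεb : sε < b := by
    refine (hmono.lt_iff_lt hsεm hbmem).1 ?_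
    rw [hwsε]; linarith
  rw [Metric.mem_ball] at hx
  set L := dist x₀ x with hL_def
  have hLx : dist x x₀ = L := dist_comm x x₀
  have hL0 : (0:ℝ) ≤ L := dist_nonneg
  have hLr : L < sε - a := by rw [← hLx]; exact hx
  obtain ⟨γ, hγ0, hγL, hγiso⟩ := hgeo x₀ x
  set f : ℝ → ℝ := fun t => u (γ t) with hf_def
  have hf0 : f 0 = -1 := by rw [hf_def]; simp only; rw [hγ0, hmin]
  by_contra hcon
  push_neg at hcon
  have hfL : -1 + ε ≤ f L := by
    rw [hf_def]; simp only; rw [hγL]; exact hcon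
  -- continuity of f on [0,L]
  have hγcont : ContinuousOn γ (Set.Icc 0 L) := by
    have hlip : LipschitzOnWith 1 γ (Set.Icc 0 L) := by
      apply LipschitzOnWith.of_dist_le_mul
      intro s hs t ht
      rw [hγiso s hs t ht, Real.dist_eq]
      simp
    exact hlip.continuousOn
  have hfc : ContinuousOn f (Set.Icc 0 L) := hc.comp_continuousOn hγcont
  -- auxiliary points
  set a' := a + (sε - a - L)/2 with ha'_def
  set m := a + (sε - a + L)/2 with hm_def
  have ha'a : a < a' := by rw [ha'_def]; linarith
  have ha'm : a' ≤ m := by rw [ha'_def, hm_def]; linarith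
  have hmsε : m < sε := by rw [hm_def]; linarith
  have hmb : m < b := hmsε.trans hsεb
  have ha'b : a' < b := lt_of_le_of_lt ha'm hmb
  have hm_mem : m ∈ Set.Icc a b := ⟨by linarith, hmb.le⟩
  have ha'_mem : a' ∈ Set.Icc a b := ⟨ha'a.le, ha'b.le⟩
  have hwm_lt : w m < -1 + ε := by rw [← hwsε]; exact hmono hm_mem hsεm hmsε
  have hwm_gt : -1 < w m := by
    have := hmono hamem hm_mem (by linarith : a < m)
    rwa [hwa] at this
  set ε' := ((w m + 1) + ε)/2 with hε'_def
  have hε'pos : 0 < ε' := by rw [hε'_def]; linarith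
  have hε'lt : ε' < ε := by rw [hε'_def]; linarith
  have hyε' : -1 + ε' ∈ Set.Icc (-1:ℝ) (w b) := ⟨by linarith, by linarith⟩
  obtain ⟨hs'm, hws'⟩ := hspec (-1+ε') hyε'
  have hs'gt : m < winv (-1+ε') := by
    refine (hmono.lt_iff_lt hm_mem hs'm).1 ?_
    rw [hws', hε'_def]; linarith
  -- η
  have hwa'_gt : -1 < w a' := by
    have := hmono hamem ha'_mem ha'a
    rwa [hwa] at this
  set η := min (w a' + 1) ε' / 2 with hη_def
  have hmin_pos : 0 < min (w a' + 1) ε' := lt_min (by linarith) hε'pos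
  have hη0 : 0 < η := by rw [hη_def]; linarith
  have hηε' : η < ε' := by
    have := min_le_right (w a' + 1) ε'
    rw [hη_def]; linarith
  have hηwa' : -1 + η < w a' := by
    have := min_le_left (w a' + 1) ε'
    rw [hη_def]; linarith
  have hwa'b : w a' ≤ w b := hmono.monotoneOn ha'_mem hbmem ha'b.le
  have hyη : -1 + η ∈ Set.Icc (-1:ℝ) (w b) := ⟨by linarith, by linarith⟩
  obtain ⟨hsηm, hwsη⟩ := hspec (-1+η) hyη
  have hsηlt : winv (-1+η) < a' := by
    refine (hmono.lt_iff_lt hsηm ha'_mem).1 ?_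
    rw [hwsη]; exact hηwa'
  -- t₁
  set A := Set.Icc 0 L ∩ f ⁻¹' (Set.Ici (-1 + ε')) with hA_def
  have hA_closed : IsClosed A := hfc.preimage_isClosed_of_isClosed isClosed_Icc isClosed_Ici
  have hA_ne : A.Nonempty := ⟨L, ⟨hL0, le_refl L⟩, by
    simp only [Set.mem_preimage, Set.mem_Ici]; linarith⟩
  have hA_bdd : BddBelow A := ⟨0, fun t ht => ht.1.1⟩
  set t₁ := sInf A with ht₁_def
  have ht₁A : t₁ ∈ A := hA_closed.csInf_mem hA_ne hA_bdd
  have ht₁mem : t₁ ∈ Set.Icc 0 L := ht₁A.1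
  have ht₁ge : -1 + ε' ≤ f t₁ := ht₁A.2
  have ht₁pos : 0 < t₁ := by
    rcases ht₁mem.1.lt_or_eq with h | h
    · exact h
    · exfalso; rw [← h, hf0] at ht₁ge; linarith
  have ht₁eq : f t₁ = -1 + ε' := by
    refine le_antisymm ?_ ht₁ge
    by_contra hgt
    push_neg at hgt
    have hnb : (𝓝[Set.Ico 0 t₁] t₁).NeBot := by
      rw [← mem_closure_iff_nhdsWithin_neBot, closure_Ico (ne_of_lt ht₁pos)]
      exact ⟨ht₁pos.le, le_refl _⟩
    have hev : ∀ᶠ t in 𝓝[Set.Icc 0 L] t₁, -1 + ε' < f t :=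
      (hfc.continuousWithinAt ht₁mem).eventually (eventually_gt_nhds hgt)
    have hev' : ∀ᶠ t in 𝓝[Set.Ico 0 t₁] t₁, -1 + ε' < f t :=
      hev.filter_mono (nhdsWithin_mono _ (Set.Ico_subset_Icc_self.trans (Set.Icc_subset_Icc_right ht₁mem.2)))
    obtain ⟨t, hft, htm⟩ := (hev'.and eventually_mem_nhdsWithin).exists
    have htA : t ∈ A := ⟨⟨htm.1, htm.2.le.trans ht₁mem.2⟩, le_of_lt hft⟩
    exact absurd (csInf_le hA_bdd htA) (not_le.2 htm.2)
  -- t₀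
  have hsub01 : Set.Icc (0:ℝ) t₁ ⊆ Set.Icc 0 L := Set.Icc_subset_Icc le_rfl ht₁mem.2
  have hfc' : ContinuousOn f (Set.Icc 0 t₁) := hfc.mono hsub01
  set B := Set.Icc 0 t₁ ∩ f ⁻¹' (Set.Iic (-1 + η)) with hB_def
  have hB_closed : IsClosed B := hfc'.preimage_isClosed_of_isClosed isClosed_Icc isClosed_Iic
  have hB_ne : B.Nonempty := ⟨0, ⟨le_refl _, ht₁pos.le⟩, by
    simp only [Set.mem_preimage, Set.mem_Iic]; rw [hf0]; linarith⟩
  have hB_bdd : BddAbove B := ⟨t₁, fun t ht => ht.1.2⟩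
  set t₀ := sSup B with ht₀_def
  have ht₀B : t₀ ∈ B := hB_closed.csSup_mem hB_ne hB_bdd
  have ht₀mem : t₀ ∈ Set.Icc 0 t₁ := ht₀B.1
  have ht₀le : f t₀ ≤ -1 + η := ht₀B.2
  have ht₀lt₁ : t₀ < t₁ := by
    rcases ht₀mem.2.lt_or_eq with h | h
    · exact h
    · exfalso; rw [h, ht₁eq] at ht₀le; linarith
  have ht₀eq : f t₀ = -1 + η := by
    refine le_antisymm ht₀le ?_
    by_contra hgt
    push_neg at hgt
    have hnb : (𝓝[Set.Ioc t₀ t₁] t₀).NeBot := by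
      rw [← mem_closure_iff_nhdsWithin_neBot, closure_Ioc (ne_of_lt ht₀lt₁)]
      exact ⟨le_refl _, ht₀lt₁.le⟩
    have hev : ∀ᶠ t in 𝓝[Set.Icc 0 t₁] t₀, f t < -1 + η :=
      (hfc'.continuousWithinAt ht₀mem).eventually (eventually_lt_nhds hgt)
    have hev' : ∀ᶠ t in 𝓝[Set.Ioc t₀ t₁] t₀, f t < -1 + η :=
      hev.filter_mono (nhdsWithin_mono _ (Set.Ioc_subset_Icc_self.trans (Set.Icc_subset_Icc_left ht₀mem.1)))
    obtain ⟨t, hft, htm⟩ := (hev'.and eventually_mem_nhdsWithin).exists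
    have htB : t ∈ B := ⟨⟨ht₀mem.1.trans htm.1.le, htm.2⟩, le_of_lt hft⟩
    exact absurd (le_csSup hB_bdd htB) (not_le.2 htm.1)
  -- bounds in the middle
  have hmid : ∀ t ∈ Set.Ioo t₀ t₁, -1 + η < f t ∧ f t < -1 + ε' := by
    intro t ht
    have htm : t ∈ Set.Icc 0 L := ⟨ht₀mem.1.trans ht.1.le, ht.2.le.trans ht₁mem.2⟩
    constructor
    · by_contra h
      push_neg at h
      have : t ∈ B := ⟨⟨htm.1, ht.2.le⟩, h⟩
      exact absurd (le_csSup hB_bdd this) (not_le.2 ht.1)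
    · by_contra h
      push_neg at h
      have : t ∈ A := ⟨htm, h⟩
      exact absurd (csInf_le hA_bdd this) (not_le.2 ht.2)
  have hflo : ∀ t ∈ Set.Icc t₀ t₁, f t ∈ Set.Icc (-1+η) (-1+ε') := by
    intro t ht
    rcases eq_or_lt_of_le ht.1 with h | h
    · rw [← h, ht₀eq]; exact ⟨le_refl _, by linarith⟩
    rcases eq_or_lt_of_le ht.2 with h2 | h2
    · rw [h2, ht₁eq]; exact ⟨by linarith, le_refl _⟩
    exact ⟨(hmid t ⟨h, h2⟩).1.le, (hmid t ⟨h, h2⟩).2.le⟩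
  have hfIoo : ∀ t ∈ Set.Icc t₀ t₁, f t ∈ Set.Ioo (-1:ℝ) (w b) := by
    intro t ht
    obtain ⟨h1, h2⟩ := hflo t ht
    exact ⟨by linarith, by linarith⟩
  -- φ = winv ∘ f
  set φ : ℝ → ℝ := fun t => winv (f t) with hφ_def
  have hsub : Set.Icc t₀ t₁ ⊆ Set.Icc 0 L :=
    Set.Icc_subset_Icc ht₀mem.1 ht₁mem.2
  have hφc : ContinuousOn φ (Set.Icc t₀ t₁) := by
    intro t ht
    exact (hwinv_cont (f t) (hfIoo t ht)).comp_continuousWithinAt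
      ((hfc.mono hsub).continuousWithinAt ht)
  have hder : ∀ t ∈ Set.Ioo t₀ t₁, ∃ d, HasDerivAt φ d t ∧ |d| ≤ 1 := by
    intro t ht
    have htL : t ∈ Set.Ioo 0 L :=
      ⟨lt_of_le_of_lt ht₀mem.1 ht.1, lt_of_lt_of_le ht.2 ht₁mem.2⟩
    obtain ⟨d, hd, hdle⟩ := hgrad γ L hγiso t htL
    have hyI : f t ∈ Set.Ioo (-1:ℝ) (w b) := hfIoo t (Set.Ioo_subset_Icc_self ht)
    obtain ⟨hsm, hws⟩ := hspec (f t) (Set.Ioo_subset_Icc_self hyI)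
    have hsa : a < winv (f t) := by
      refine (hmono.lt_iff_lt hamem hsm).1 ?_
      rw [hwa, hws]; exact hyI.1
    have hsb : winv (f t) < b := by
      refine (hmono.lt_iff_lt hsm hbmem).1 ?_
      rw [hws]; exact hyI.2
    have hw's : 0 < w' (winv (f t)) := hw'pos _ ⟨hsa, hsb⟩
    have hwinv_d : HasDerivAt winv (w' (winv (f t)))⁻¹ (f t) := by
      refine HasDerivAt.of_local_left_inverse (hwinv_cont (f t) hyI)
        (hwd _ hsm) (ne_of_gt hw's) ?_
      filter_upwards [Ioo_mem_nhds hyI.1 hyI.2] with z hz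
      exact (hspec z (Set.Ioo_subset_Icc_self hz)).2
    have hφd : HasDerivAt φ ((w' (winv (f t)))⁻¹ * d) t := hwinv_d.comp t hd
    refine ⟨_, hφd, ?_⟩
    rw [abs_mul, abs_inv, abs_of_pos hw's]
    calc (w' (winv (f t)))⁻¹ * |d| ≤ (w' (winv (f t)))⁻¹ * w' (winv (f t)) :=
          mul_le_mul_of_nonneg_left hdle (inv_nonneg.2 hw's.le)
      _ = 1 := inv_mul_cancel₀ (ne_of_gt hw's)
  set D : ℝ → ℝ := fun t => if h : t ∈ Set.Ioo t₀ t₁ then (hder t h).choose else 0 with hD_def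
  have hDd : ∀ t ∈ Set.Ioo t₀ t₁, HasDerivAt φ (D t) t := by
    intro t ht
    rw [hD_def]
    simp only [ht, dif_pos]
    exact (hder t ht).choose_spec.1
  have hDle : ∀ t ∈ Set.Ioo t₀ t₁, |D t| ≤ 1 := by
    intro t ht
    rw [hD_def]
    simp only [ht, dif_pos]
    exact (hder t ht).choose_spec.2
  obtain ⟨c, hcmem, hceq⟩ := exists_hasDerivAt_eq_slope φ D ht₀lt₁ hφc hDd
  have hslope : (φ t₁ - φ t₀) / (t₁ - t₀) ≤ 1 := by
    rw [← hceq]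
    exact (le_abs_self _).trans (hDle c hcmem)
  have hdiff : φ t₁ - φ t₀ ≤ t₁ - t₀ := by
    rw [div_le_one (by linarith)] at hslope
    exact hslope
  have hφ1 : φ t₁ = winv (-1+ε') := by rw [hφ_def]; simp only; rw [ht₁eq]
  have hφ0 : φ t₀ = winv (-1+η) := by rw [hφ_def]; simp only; rw [ht₀eq]
  have hc1 : m < φ t₁ := by rw [hφ1]; exact hs'gt
  have hc0 : φ t₀ < a' := by rw [hφ0]; exact hsηlt
  have hma' : m - a' = L := by rw [hm_def, ha'_def]; ring
  have ht₁L : t₁ ≤ L := ht₁mem.2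
  have ht₀0 : 0 ≤ t₀ := ht₀mem.1
  linarith
end

section
/- Let u : M → ℝ be a p-Laplacian eigenfunction on a compact n-manifold with min u = -1 and max u = u* > 0, satisfying the gradient comparison |∇u| ≤ w'∘w^{-1}∘u for a model w : [a,b] → [-1, u*] with w(a) = -1, w(b) = u*, w' > 0 on (a,b). Then the diameter d of M satisfies d ≥ b - a. -/
/-- let `u` be an eigenfunction on a compact manifold `M` with
`min u = -1`, `max u = u* > 0`, satisfying the gradient comparison
`|∇u| ≤ w'∘w⁻¹∘u` for a model `w : [a,b] → [-1,u*]` with `w(a) = -1`,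
`w(b) = u*`, `w' > 0` on `(a,b)`.  Then the diameter of `M` satisfies
`d ≥ b - a`.  The Riemannian structure enters through the existence of
unit-speed minimizing geodesics and the gradient bound along them. -/
theorem stmt18 {M : Type*} [MetricSpace M] [CompactSpace M]
    (u : M → ℝ) (hc : Continuous u)
    (ustar : ℝ) (hustar : 0 < ustar)
    (x₀ y₀ : M) (hmin : u x₀ = -1) (hmax : u y₀ = ustar)
    (hlb : ∀ x, -1 ≤ u x) (hub : ∀ x, u x ≤ ustar)
    (a b : ℝ) (hab : a < b)
    (w w' winv : ℝ → ℝ)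
    (hwa : w a = -1) (hwb : w b = ustar)
    (hwd : ∀ t ∈ Set.Icc a b, HasDerivAt w (w' t) t)
    (hw'pos : ∀ t ∈ Set.Ioo a b, 0 < w' t)
    (hinv : ∀ t ∈ Set.Icc a b, winv (w t) = t)
    (hrange : ∀ x, u x ∈ Set.Icc (-1) ustar)
    (hgeo : ∀ x y : M, ∃ γ : ℝ → M, γ 0 = x ∧ γ (dist x y) = y ∧
        ∀ s ∈ Set.Icc 0 (dist x y), ∀ t ∈ Set.Icc 0 (dist x y),
          dist (γ s) (γ t) = |s - t|)
    (hgrad : ∀ (γ : ℝ → M) (L : ℝ),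
        (∀ s ∈ Set.Icc 0 L, ∀ t ∈ Set.Icc 0 L, dist (γ s) (γ t) = |s - t|) →
        ∀ t ∈ Set.Ioo 0 L, ∃ d : ℝ,
          HasDerivAt (fun s => u (γ s)) d t ∧ |d| ≤ w' (winv (u (γ t)))) :
    b - a ≤ Metric.diam (Set.univ : Set M) := by
  classical
  obtain ⟨γ, hγ0, hγL, hiso⟩ := hgeo x₀ y₀
  set L := dist x₀ y₀ with hLdef
  have hL0 : (0:ℝ) ≤ L := dist_nonneg
  -- continuity of γ on [0,L]
  have hγcont : ContinuousOn γ (Set.Icc 0 L) := by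
    refine (LipschitzOnWith.of_dist_le_mul (K := 1) ?_).continuousOn
    intro s hs t ht
    rw [hiso s hs t ht]
    simp [Real.dist_eq]
  set f : ℝ → ℝ := fun s => u (γ s) with hfdef
  have hfc : ContinuousOn f (Set.Icc 0 L) := hc.comp_continuousOn hγcont
  have hf0 : f 0 = -1 := by simp only [hfdef, hγ0, hmin]
  have hfL : f L = ustar := by simp only [hfdef, hγL, hmax]
  have hwc : ContinuousOn w (Set.Icc a b) := fun t ht =>
    (hwd t ht).continuousAt.continuousWithinAt
  have hwmono : StrictMonoOn w (Set.Icc a b) := by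
    refine strictMonoOn_of_deriv_pos (convex_Icc a b) hwc ?_
    intro x hx
    rw [interior_Icc] at hx
    rw [(hwd x (Set.Ioo_subset_Icc_self hx)).deriv]
    exact hw'pos x hx
  have hwmonole := hwmono.monotoneOn
  have hsurj : ∀ y ∈ Set.Icc (-1:ℝ) ustar, ∃ τ ∈ Set.Icc a b, w τ = y := by
    intro y hy
    have h := intermediate_value_Icc hab.le hwc
    rw [hwa, hwb] at h
    obtain ⟨τ, hτ, hτy⟩ := h hy
    exact ⟨τ, hτ, hτy⟩
  -- continuity of winv at interior points of the range
  have hwinv_tendsto : ∀ τ ∈ Set.Ioo a b, Filter.Tendsto winv (nhds (w τ)) (nhds τ) := by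
    intro τ hτ
    have hτI : τ ∈ Set.Icc a b := Set.Ioo_subset_Icc_self hτ
    refine tendsto_order.2 ⟨?_, ?_⟩
    · intro c hc
      set c' := max c a with hc'
      have hc'τ : c' < τ := max_lt hc hτ.1
      have hc'I : c' ∈ Set.Icc a b := ⟨le_max_right _ _, le_of_lt (lt_of_lt_of_le hc'τ hτI.2)⟩
      have h1 : w c' < w τ := hwmono hc'I hτI hc'τ
      have h2 : w τ < w b := hwmono hτI (Set.right_mem_Icc.2 hab.le) hτ.2
      filter_upwards [Ioo_mem_nhds h1 h2] with y hy
      have hyI : y ∈ Set.Icc (-1:ℝ) ustar := by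
        constructor
        · rw [← hwa]
          exact le_of_lt (lt_of_le_of_lt (hwmonole (Set.left_mem_Icc.2 hab.le) hc'I hc'I.1) hy.1)
        · rw [← hwb]; exact hy.2.le
      obtain ⟨σ, hσI, rfl⟩ := hsurj y hyI
      rw [hinv σ hσI]
      by_contra hcon
      push_neg at hcon
      have : w σ ≤ w c' := hwmonole hσI hc'I (le_trans hcon (le_max_left _ _))
      exact absurd hy.1 (not_lt.2 this)
    · intro c hc
      set c' := min c b with hc'
      have hτc' : τ < c' := lt_min hc hτ.2
      have hc'I : c' ∈ Set.Icc a b := ⟨le_of_lt (lt_of_le_of_lt hτI.1 hτc'), min_le_right _ _⟩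
      have h1 : w τ < w c' := hwmono hτI hc'I hτc'
      have h2 : w a < w τ := hwmono (Set.left_mem_Icc.2 hab.le) hτI hτ.1
      filter_upwards [Ioo_mem_nhds h2 h1] with y hy
      have hyI : y ∈ Set.Icc (-1:ℝ) ustar := by
        constructor
        · rw [← hwa]; exact hy.1.le
        · rw [← hwb]
          exact le_of_lt (lt_of_lt_of_le hy.2 (hwmonole hc'I (Set.right_mem_Icc.2 hab.le) hc'I.2))
      obtain ⟨σ, hσI, rfl⟩ := hsurj y hyI
      rw [hinv σ hσI]
      by_contra hcon
      push_neg at hcon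
      have : w c' ≤ w σ := hwmonole hc'I hσI (le_trans (min_le_left _ _) hcon)
      exact absurd hy.2 (not_lt.2 this)
  have hwinv_cont : ∀ τ ∈ Set.Ioo a b, ContinuousAt winv (w τ) := by
    intro τ hτ
    have := hwinv_tendsto τ hτ
    rw [ContinuousAt, hinv τ (Set.Ioo_subset_Icc_self hτ)]
    exact this
  have hlinv : ∀ τ ∈ Set.Ioo a b, ∀ᶠ y in nhds (w τ), w (winv y) = y := by
    intro τ hτ
    have hτI : τ ∈ Set.Icc a b := Set.Ioo_subset_Icc_self hτ
    have h2 : w a < w τ := hwmono (Set.left_mem_Icc.2 hab.le) hτI hτ.1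
    have h3 : w τ < w b := hwmono hτI (Set.right_mem_Icc.2 hab.le) hτ.2
    filter_upwards [Ioo_mem_nhds h2 h3] with y hy
    have hyI : y ∈ Set.Icc (-1:ℝ) ustar := by
      rw [← hwa, ← hwb]; exact ⟨hy.1.le, hy.2.le⟩
    obtain ⟨σ, hσI, rfl⟩ := hsurj y hyI
    rw [hinv σ hσI]
  have hwinv_deriv : ∀ τ ∈ Set.Ioo a b, HasDerivAt winv (w' τ)⁻¹ (w τ) := by
    intro τ hτ
    have h1 : HasDerivAt w (w' τ) (winv (w τ)) := by
      rw [hinv τ (Set.Ioo_subset_Icc_self hτ)]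
      exact hwd τ (Set.Ioo_subset_Icc_self hτ)
    exact HasDerivAt.of_local_left_inverse (hwinv_cont τ hτ) h1
      (ne_of_gt (hw'pos τ hτ)) (hlinv τ hτ)
  -- main epsilon claim
  have key : ∀ ε : ℝ, 0 < ε → ε < (b - a) / 4 → b - a - 4 * ε ≤ L := by
    intro ε hε hε4
    have habε : a + 2*ε < b := by linarith
    have ha' : a + ε ∈ Set.Icc a b := ⟨by linarith, by linarith⟩
    have hb' : b - ε ∈ Set.Icc a b := ⟨by linarith, by linarith⟩
    have ha'2 : a + 2*ε ∈ Set.Icc a b := ⟨by linarith, by linarith⟩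
    have hb'2 : b - 2*ε ∈ Set.Icc a b := ⟨by linarith, by linarith⟩
    have haI : a ∈ Set.Icc a b := Set.left_mem_Icc.2 hab.le
    have hbI : b ∈ Set.Icc a b := Set.right_mem_Icc.2 hab.le
    have hwa' : (-1:ℝ) < w (a + ε) := by rw [← hwa]; exact hwmono haI ha' (by linarith)
    have hwb' : w (b - ε) < ustar := by rw [← hwb]; exact hwmono hb' hbI (by linarith)
    have hwa'b' : w (a + ε) < w (b - ε) := hwmono ha' hb' (by linarith)
    -- t₂ : first time f hits w (b-ε)
    set S₂ : Set ℝ := {t | t ∈ Set.Icc 0 L ∧ f t = w (b - ε)} with hS₂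
    have hS₂closed : IsClosed S₂ := by
      have heq : S₂ = Set.Icc 0 L ∩ f ⁻¹' {w (b - ε)} := rfl
      rw [heq]
      exact hfc.preimage_isClosed_of_isClosed isClosed_Icc isClosed_singleton
    have hS₂ne : S₂.Nonempty := by
      have h := intermediate_value_Icc hL0 hfc
      rw [hf0, hfL] at h
      have hwb'lb : (-1:ℝ) ≤ w (b - ε) := by
        rw [← hwa]; exact hwmonole haI hb' (by linarith)
      obtain ⟨t, ht, hft⟩ := h ⟨hwb'lb, hwb'.le⟩
      exact ⟨t, ht, hft⟩
    have hS₂bdd : BddBelow S₂ := ⟨0, fun t ht => ht.1.1⟩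
    set t₂ := sInf S₂ with ht₂def
    have ht₂mem : t₂ ∈ S₂ := hS₂closed.csInf_mem hS₂ne hS₂bdd
    have ht₂I : t₂ ∈ Set.Icc 0 L := ht₂mem.1
    have hft₂ : f t₂ = w (b - ε) := ht₂mem.2
    -- t₁ : last time before t₂ that f hits w (a+ε)
    set S₁ : Set ℝ := {t | t ∈ Set.Icc 0 t₂ ∧ f t = w (a + ε)} with hS₁
    have hsub₂ : Set.Icc 0 t₂ ⊆ Set.Icc 0 L := Set.Icc_subset_Icc le_rfl ht₂I.2
    have hS₁closed : IsClosed S₁ := by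
      have heq : S₁ = Set.Icc 0 t₂ ∩ f ⁻¹' {w (a + ε)} := rfl
      rw [heq]
      exact (hfc.mono hsub₂).preimage_isClosed_of_isClosed isClosed_Icc isClosed_singleton
    have hS₁ne : S₁.Nonempty := by
      have h := intermediate_value_Icc ht₂I.1 (hfc.mono hsub₂)
      rw [hf0, hft₂] at h
      obtain ⟨t, ht, hft⟩ := h ⟨hwa'.le, hwa'b'.le⟩
      exact ⟨t, ht, hft⟩
    have hS₁bdd : BddAbove S₁ := ⟨t₂, fun t ht => ht.1.2⟩
    set t₁ := sSup S₁ with ht₁def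
    have ht₁mem : t₁ ∈ S₁ := hS₁closed.csSup_mem hS₁ne hS₁bdd
    have ht₁I : t₁ ∈ Set.Icc 0 t₂ := ht₁mem.1
    have hft₁ : f t₁ = w (a + ε) := ht₁mem.2
    have ht₁pos : 0 < t₁ := by
      rcases eq_or_lt_of_le ht₁I.1 with h | h
      · exfalso
        rw [← h, hf0] at hft₁
        exact absurd hft₁ (ne_of_lt hwa')
      · exact h
    have ht₁₂ : t₁ < t₂ := by
      rcases eq_or_lt_of_le ht₁I.2 with h | h
      · exfalso
        rw [h, hft₂] at hft₁
        exact absurd hft₁ (ne_of_gt hwa'b')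
      · exact h
    have hIoosub : Set.Ioo t₁ t₂ ⊆ Set.Ioo 0 L := fun t ht =>
      ⟨lt_trans ht₁pos ht.1, lt_of_lt_of_le ht.2 ht₂I.2⟩
    have hIoosubI : Set.Ioo t₁ t₂ ⊆ Set.Icc 0 L := fun t ht =>
      ⟨(hIoosub ht).1.le, (hIoosub ht).2.le⟩
    -- f stays strictly between w(a+ε) and w(b-ε) on (t₁,t₂)
    have hmid : ∀ t ∈ Set.Ioo t₁ t₂, w (a + ε) < f t ∧ f t < w (b - ε) := by
      intro t ht
      constructor
      · by_contra hcon
        push_neg at hcon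
        rcases eq_or_lt_of_le hcon with h | h
        · exact absurd (le_csSup hS₁bdd ⟨⟨(hIoosub ht).1.le, ht.2.le⟩, h⟩)
            (not_le.2 ht.1)
        · have hsubt : Set.Icc t t₂ ⊆ Set.Icc 0 L :=
            Set.Icc_subset_Icc (hIoosub ht).1.le ht₂I.2
          have hIVT := intermediate_value_Icc ht.2.le (hfc.mono hsubt)
          rw [hft₂] at hIVT
          obtain ⟨s, hs, hfs⟩ := hIVT ⟨h.le, hwa'b'.le⟩
          have : s ≤ t₁ := le_csSup hS₁bdd ⟨⟨le_trans (hIoosub ht).1.le hs.1, hs.2⟩, hfs⟩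
          linarith [hs.1, ht.1]
      · by_contra hcon
        push_neg at hcon
        rcases eq_or_lt_of_le hcon with h | h
        · exact absurd (csInf_le hS₂bdd ⟨hIoosubI ht, h.symm⟩) (not_le.2 ht.2)
        · have hsubt : Set.Icc t₁ t ⊆ Set.Icc 0 L :=
            Set.Icc_subset_Icc ht₁pos.le (hIoosub ht).2.le
          have hIVT := intermediate_value_Icc ht.1.le (hfc.mono hsubt)
          rw [hft₁] at hIVT
          obtain ⟨s, hs, hfs⟩ := hIVT ⟨hwa'b'.le, h.le⟩
          have hsI : s ∈ Set.Icc 0 L := hsubt hs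
          have : t₂ ≤ s := csInf_le hS₂bdd ⟨hsI, hfs⟩
          linarith [hs.2, ht.2]
    -- the rescaled function g
    set g : ℝ → ℝ := fun t => winv (f t) with hgdef
    have hgmem : ∀ t ∈ Set.Ioo t₁ t₂, g t ∈ Set.Ioo (a + ε) (b - ε) ∧ w (g t) = f t := by
      intro t ht
      obtain ⟨h1, h2⟩ := hmid t ht
      have hftI : f t ∈ Set.Icc (-1:ℝ) ustar := ⟨by linarith, by linarith⟩
      obtain ⟨σ, hσI, hσ⟩ := hsurj (f t) hftI
      have hσmem : σ ∈ Set.Ioo (a + ε) (b - ε) := by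
        constructor
        · by_contra hcon
          push_neg at hcon
          have : w σ ≤ w (a + ε) := hwmonole hσI ha' hcon
          rw [hσ] at this; linarith
        · by_contra hcon
          push_neg at hcon
          have : w (b - ε) ≤ w σ := hwmonole hb' hσI hcon
          rw [hσ] at this; linarith
      have : g t = σ := by rw [hgdef]; simp only; rw [← hσ, hinv σ hσI]
      rw [this, hσ]
      exact ⟨hσmem, rfl⟩
    have hIoosubab : Set.Ioo (a + ε) (b - ε) ⊆ Set.Ioo a b := fun x hx =>
      ⟨by linarith [hx.1], by linarith [hx.2]⟩
    -- derivative bound for g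
    have hgd : ∀ t ∈ Set.Ioo t₁ t₂, HasDerivAt g (deriv g t) t ∧ |deriv g t| ≤ 1 := by
      intro t ht
      obtain ⟨hgt, hwgt⟩ := hgmem t ht
      have hgtab : g t ∈ Set.Ioo a b := hIoosubab hgt
      obtain ⟨d, hd, hdb⟩ := hgrad γ L hiso t (hIoosub ht)
      have hd' : HasDerivAt f d t := hd
      have hdb' : |d| ≤ w' (g t) := hdb
      have hwi : HasDerivAt winv (w' (g t))⁻¹ (f t) := by
        rw [← hwgt]
        exact hwinv_deriv (g t) hgtab
      have hcomp : HasDerivAt g ((w' (g t))⁻¹ * d) t := HasDerivAt.comp t hwi hd'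
      have hw'gt : 0 < w' (g t) := hw'pos (g t) hgtab
      have hbound : |(w' (g t))⁻¹ * d| ≤ 1 := by
        have h1 : (w' (g t))⁻¹ * |d| ≤ (w' (g t))⁻¹ * (w' (g t)) :=
          mul_le_mul_of_nonneg_left hdb' (inv_nonneg.2 hw'gt.le)
        rw [inv_mul_cancel₀ hw'gt.ne'] at h1
        calc |(w' (g t))⁻¹ * d| = (w' (g t))⁻¹ * |d| := by
              rw [abs_mul, abs_inv, abs_of_pos hw'gt]
          _ ≤ 1 := h1
      rw [hcomp.deriv]
      exact ⟨hcomp, hbound⟩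
    -- Lipschitz bound on (t₁, t₂)
    have hlip : ∀ s ∈ Set.Ioo t₁ t₂, ∀ s' ∈ Set.Ioo t₁ t₂, s ≤ s' → |g s' - g s| ≤ s' - s := by
      intro s hs s' hs' hss'
      have hsub : Set.Icc s s' ⊆ Set.Ioo t₁ t₂ := Set.Icc_subset_Ioo hs.1 hs'.2
      have h := Convex.norm_image_sub_le_of_norm_hasDerivWithin_le (f := g) (f' := deriv g)
        (C := 1) (s := Set.Icc s s')
        (fun x hx => ((hgd x (hsub hx)).1).hasDerivWithinAt)
        (fun x hx => by rw [Real.norm_eq_abs]; exact (hgd x (hsub hx)).2)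
        (convex_Icc s s')
        (Set.left_mem_Icc.2 hss') (Set.right_mem_Icc.2 hss')
      rw [Real.norm_eq_abs, Real.norm_eq_abs, one_mul] at h
      calc |g s' - g s| ≤ |s' - s| := h
        _ = s' - s := abs_of_nonneg (by linarith)
    -- find s near t₁ with g s < a + 2ε
    set m := (t₁ + t₂) / 2 with hm
    have ht₁m : t₁ < m := by rw [hm]; linarith
    have hmt₂ : m < t₂ := by rw [hm]; linarith
    have hwa2 : w (a + ε) < w (a + 2*ε) := hwmono ha' ha'2 (by linarith)
    have hwb2 : w (b - 2*ε) < w (b - ε) := hwmono hb'2 hb' (by linarith)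
    have hexs : ∃ s ∈ Set.Ioo t₁ m, f s < w (a + 2*ε) := by
      have hcf : ContinuousWithinAt f (Set.Icc 0 L) t₁ := hfc t₁ (hsub₂ ht₁I)
      have hev : ∀ᶠ x in nhdsWithin t₁ (Set.Icc 0 L), f x < w (a + 2*ε) :=
        Filter.Tendsto.eventually_lt_const (by rw [hft₁]; exact hwa2) hcf
      have hsubm : Set.Ioo t₁ m ⊆ Set.Icc 0 L := fun x hx =>
        hIoosubI ⟨hx.1, lt_trans hx.2 hmt₂⟩
      have hev2 : ∀ᶠ x in nhdsWithin t₁ (Set.Ioo t₁ m), f x < w (a + 2*ε) :=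
        hev.filter_mono (nhdsWithin_mono t₁ hsubm)
      have hne : (nhdsWithin t₁ (Set.Ioo t₁ m)).NeBot := by
        rw [← mem_closure_iff_nhdsWithin_neBot, closure_Ioo (ne_of_lt ht₁m)]
        exact ⟨le_rfl, ht₁m.le⟩
      obtain ⟨s, hsmem, hsf⟩ := (hev2.and self_mem_nhdsWithin).exists
      exact ⟨s, hsf, hsmem⟩
    have hexs' : ∃ s' ∈ Set.Ioo m t₂, w (b - 2*ε) < f s' := by
      have hcf : ContinuousWithinAt f (Set.Icc 0 L) t₂ := hfc t₂ ht₂I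
      have hev : ∀ᶠ x in nhdsWithin t₂ (Set.Icc 0 L), w (b - 2*ε) < f x :=
        Filter.Tendsto.eventually_const_lt (by rw [hft₂]; exact hwb2) hcf
      have hsubm : Set.Ioo m t₂ ⊆ Set.Icc 0 L := fun x hx =>
        hIoosubI ⟨lt_trans ht₁m hx.1, hx.2⟩
      have hev2 : ∀ᶠ x in nhdsWithin t₂ (Set.Ioo m t₂), w (b - 2*ε) < f x :=
        hev.filter_mono (nhdsWithin_mono t₂ hsubm)
      have hne : (nhdsWithin t₂ (Set.Ioo m t₂)).NeBot := by
        rw [← mem_closure_iff_nhdsWithin_neBot, closure_Ioo (ne_of_lt hmt₂)]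
        exact ⟨hmt₂.le, le_rfl⟩
      obtain ⟨s, hsmem, hsf⟩ := (hev2.and self_mem_nhdsWithin).exists
      exact ⟨s, hsf, hsmem⟩
    obtain ⟨s, hs, hsf⟩ := hexs
    obtain ⟨s', hs', hs'f⟩ := hexs'
    have hsIoo : s ∈ Set.Ioo t₁ t₂ := ⟨hs.1, lt_trans hs.2 hmt₂⟩
    have hs'Ioo : s' ∈ Set.Ioo t₁ t₂ := ⟨lt_trans ht₁m hs'.1, hs'.2⟩
    obtain ⟨hgs, hwgs⟩ := hgmem s hsIoo
    obtain ⟨hgs', hwgs'⟩ := hgmem s' hs'Ioo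
    -- g s < a + 2ε
    have hgs2 : g s < a + 2*ε := by
      by_contra hcon
      push_neg at hcon
      have hgsI : g s ∈ Set.Icc a b := Set.Ioo_subset_Icc_self (hIoosubab hgs)
      have : w (a + 2*ε) ≤ w (g s) := hwmonole ha'2 hgsI hcon
      rw [hwgs] at this; linarith
    have hgs'2 : b - 2*ε < g s' := by
      by_contra hcon
      push_neg at hcon
      have hgsI : g s' ∈ Set.Icc a b := Set.Ioo_subset_Icc_self (hIoosubab hgs')
      have : w (g s') ≤ w (b - 2*ε) := hwmonole hgsI hb'2 hcon
      rw [hwgs'] at this; linarith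
    have hss' : s ≤ s' := le_of_lt (lt_trans hs.2 hs'.1)
    have hL1 := hlip s hsIoo s' hs'Ioo hss'
    have h1 : g s' - g s ≤ s' - s := le_trans (le_abs_self _) hL1
    have h2 : s' - s ≤ L := by
      have := (hIoosub hsIoo).1
      have := (hIoosub hs'Ioo).2
      linarith
    linarith
  -- conclude b - a ≤ L
  have hbaL : b - a ≤ L := by
    by_contra hcon
    push_neg at hcon
    set ε := min ((b - a) / 8) ((b - a - L) / 8) with hε
    have hε1 : 0 < ε := lt_min (by linarith) (by linarith)
    have hε2 : ε < (b - a) / 4 := lt_of_le_of_lt (min_le_left _ _) (by linarith)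
    have hkey := key ε hε1 hε2
    have : ε ≤ (b - a - L) / 8 := min_le_right _ _
    linarith
  refine le_trans hbaL ?_
  exact Metric.dist_le_diam_of_mem isCompact_univ.isBounded (Set.mem_univ x₀) (Set.mem_univ y₀)
end
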